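/- Let G be a group acting sharply 2-transitively on a set X, with the action not of characteristic 2 (i.e., some involution of G has a fixed point in X). Then the set I_G of involutions of G has at least 2 elements and the conjugation action of G on I_G is sharply 2-transitive. -/
import Mathlib


/-- An involution of a group is an element of order 2. -/
def IsInvolution {G : Type*} [Monoid G] (g : G) : Prop := orderOf g = 2

/-- A group `G` acts sharply 2-transitively on `X` if `X` has at least two elements and
any pair of distinct points of `X` is sent to any other such pair by a unique element of `G`. -/
def SharplyTwoTransitive (G X : Type*) [Group G] [MulAction G X] : Prop :=
  Nontrivial X ∧ ∀ x₁ x₂ y₁ y₂ : X, x₁ ≠ x₂ → y₁ ≠ y₂ →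
    ∃! g : G, g • x₁ = y₁ ∧ g • x₂ = y₂
/-- The conjugation action of `G` on its set of involutions is sharply 2-transitive:
there are at least two involutions, and any ordered pair of distinct involutions is sent to
any other such pair by conjugation by a unique element of `G`. -/
def InvolutionsSharplyTwoTransitive (G : Type*) [Group G] : Prop :=
  (∃ u v : G, IsInvolution u ∧ IsInvolution v ∧ u ≠ v) ∧
  ∀ u v u' v' : G, IsInvolution u → IsInvolution v → IsInvolution u' → IsInvolution v' →
    u ≠ v → u' ≠ v' → ∃! g : G, g * u * g⁻¹ = u' ∧ g * v * g⁻¹ = v'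

section AuxStmt10

variable {G X : Type*} [Group G] [MulAction G X]

/-- An element fixing two distinct points is the identity. -/
lemma aux10_fix_two (h2t : SharplyTwoTransitive G X) {g : G} {x y : X}
    (hxy : x ≠ y) (hx : g • x = x) (hy : g • y = y) : g = 1 := by
  obtain ⟨w, _, huniq⟩ := h2t.2 x y x y hxy hxy
  have h1 := huniq g ⟨hx, hy⟩
  have h2 := huniq 1 ⟨one_smul G x, one_smul G y⟩
  rw [h1, h2]

lemma aux10_sq {u : G} (hu : IsInvolution u) : u * u = 1 := by
  have h := pow_orderOf_eq_one u
  rw [hu, pow_two] at h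
  exact h

lemma aux10_ne_one {u : G} (hu : IsInvolution u) : u ≠ 1 := by
  intro h
  rw [h] at hu
  simp [IsInvolution] at hu

lemma aux10_smul_smul {u : G} (hu : IsInvolution u) (y : X) : u • u • y = y := by
  rw [smul_smul, aux10_sq hu, one_smul]

lemma aux10_mk {u : G} (h1 : u * u = 1) (h2 : u ≠ 1) : IsInvolution u := by
  have hp : u ^ (2 : ℕ) = 1 := by rw [pow_two]; exact h1
  exact orderOf_eq_prime hp h2

lemma aux10_conj {u : G} (hu : IsInvolution u) (g : G) : IsInvolution (g * u * g⁻¹) := by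
  refine aux10_mk ?_ ?_
  · have : g * u * g⁻¹ * (g * u * g⁻¹) = g * (u * u) * g⁻¹ := by group
    rw [this, aux10_sq hu]
    group
  · intro h
    apply aux10_ne_one hu
    have : u = g⁻¹ * (g * u * g⁻¹) * g := by group
    rw [h] at this
    simpa using this

lemma aux10_moves (h2t : SharplyTwoTransitive G X) {u : G} (hu : IsInvolution u) :
    ∃ y : X, u • y ≠ y := by
  by_contra h
  push_neg at h
  have : Nontrivial X := h2t.1
  obtain ⟨x, y, hxy⟩ := exists_pair_ne X
  exact aux10_ne_one hu (aux10_fix_two h2t hxy (h x) (h y))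

/-- The unique swapper of a pair. -/
lemma aux10_swap_unique (h2t : SharplyTwoTransitive G X) {a b : X} (hab : a ≠ b)
    {g₁ g₂ : G} (h1a : g₁ • a = b) (h1b : g₁ • b = a)
    (h2a : g₂ • a = b) (h2b : g₂ • b = a) : g₁ = g₂ := by
  obtain ⟨w, _, huniq⟩ := h2t.2 a b b a hab hab.symm
  rw [huniq g₁ ⟨h1a, h1b⟩, huniq g₂ ⟨h2a, h2b⟩]

/-- In characteristic ≠ 2, every involution has a fixed point. -/
lemma aux10_has_fixed (h2t : SharplyTwoTransitive G X)
    (hchar : ∃ (u : G) (x : X), IsInvolution u ∧ u • x = x)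
    {v : G} (hv : IsInvolution v) : ∃ p : X, v • p = p := by
  obtain ⟨u, x₀, hu, hux⟩ := hchar
  obtain ⟨a, ha⟩ := aux10_moves h2t hu
  obtain ⟨y, hy⟩ := aux10_moves h2t hv
  obtain ⟨g, ⟨hg1, hg2⟩, _⟩ := h2t.2 a (u • a) y (v • y) (Ne.symm ha) (Ne.symm hy)
  have hga : g⁻¹ • y = a := by rw [← hg1, inv_smul_smul]
  have hgua : g⁻¹ • (v • y) = u • a := by rw [← hg2, inv_smul_smul]
  have hw1 : (g * u * g⁻¹) • y = v • y := by
    rw [mul_smul, mul_smul, hga, hg2]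
  have hw2 : (g * u * g⁻¹) • (v • y) = y := by
    rw [mul_smul, mul_smul, hgua, aux10_smul_smul hu, hg1]
  have hv2 : v • (v • y) = y := aux10_smul_smul hv y
  have heq : g * u * g⁻¹ = v :=
    aux10_swap_unique h2t (Ne.symm hy) hw1 hw2 rfl hv2
  refine ⟨g • x₀, ?_⟩
  rw [← heq, mul_smul, mul_smul, inv_smul_smul, hux]

/-- An involution has a unique fixed point. -/
lemma aux10_fix_uniq (h2t : SharplyTwoTransitive G X) {v : G} (hv : IsInvolution v)
    {p q : X} (hp : v • p = p) (hq : v • q = q) : p = q := by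
  by_contra h
  exact aux10_ne_one hv (aux10_fix_two h2t h hp hq)

/-- Key lemma: two involutions with a common fixed point coincide. -/
lemma aux10_same_fix (h2t : SharplyTwoTransitive G X) {i j : G}
    (hi : IsInvolution i) (hj : IsInvolution j) {p : X}
    (hip : i • p = p) (hjp : j • p = p) : i = j := by
  have : Nontrivial X := h2t.1
  obtain ⟨y, hyp⟩ := exists_ne p
  have hz : i • y ≠ y := by
    intro h
    exact aux10_ne_one hi (aux10_fix_two h2t (Ne.symm hyp) hip h)
  have hw : j • y ≠ y := by
    intro h
    exact aux10_ne_one hj (aux10_fix_two h2t (Ne.symm hyp) hjp h)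
  obtain ⟨h, ⟨hh1, hh2⟩, _⟩ := h2t.2 y (i • y) y (j • y) (Ne.symm hz) (Ne.symm hw)
  have hinv1 : h⁻¹ • y = y := by rw [← hh1]; rw [inv_smul_smul, hh1]
  have hinv2 : h⁻¹ • (j • y) = i • y := by rw [← hh2, inv_smul_smul]
  have hc1 : (h * i * h⁻¹) • y = j • y := by
    rw [mul_smul, mul_smul, hinv1, hh2]
  have hc2 : (h * i * h⁻¹) • (j • y) = y := by
    rw [mul_smul, mul_smul, hinv2, aux10_smul_smul hi, hh1]
  have hcj : h * i * h⁻¹ = j :=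
    aux10_swap_unique h2t (Ne.symm hw) hc1 hc2 rfl (aux10_smul_smul hj y)
  have hjhp : j • (h • p) = h • p := by
    rw [← hcj, mul_smul, mul_smul, inv_smul_smul, hip]
  have hhp : h • p = p := aux10_fix_uniq h2t hj hjhp hjp
  have h1 : h = 1 := aux10_fix_two h2t hyp hh1 hhp
  rw [h1] at hcj
  simpa using hcj

/-- Every point is fixed by some involution. -/
lemma aux10_exists_fixing (h2t : SharplyTwoTransitive G X)
    (hchar : ∃ (u : G) (x : X), IsInvolution u ∧ u • x = x) (p : X) :
    ∃ w : G, IsInvolution w ∧ w • p = p := by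
  obtain ⟨u, x₀, hu, hux⟩ := hchar
  obtain ⟨g, hg⟩ : ∃ g : G, g • x₀ = p := by
    by_cases hx : x₀ = p
    · exact ⟨1, by rw [one_smul, hx]⟩
    · have : Nontrivial X := h2t.1
      obtain ⟨b, hb⟩ := exists_ne x₀
      obtain ⟨c, hc⟩ := exists_ne p
      obtain ⟨g, ⟨hg1, _⟩, _⟩ := h2t.2 x₀ b p c (Ne.symm hb) (Ne.symm hc)
      exact ⟨g, hg1⟩
  refine ⟨g * u * g⁻¹, aux10_conj hu g, ?_⟩
  rw [← hg, mul_smul, mul_smul, inv_smul_smul, hux]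

end AuxStmt10

/-- If `G` acts sharply 2-transitively on `X` and the action is not of characteristic 2
(some involution has a fixed point), then the set of involutions of `G` has at least two
elements and the conjugation action of `G` on it is sharply 2-transitive. -/
theorem stmt_10 {G X : Type*} [Group G] [MulAction G X]
    (h2t : SharplyTwoTransitive G X)
    (hchar : ∃ (u : G) (x : X), IsInvolution u ∧ u • x = x) :
    InvolutionsSharplyTwoTransitive G := by
  constructor
  · -- there exist two distinct involutions
    have : Nontrivial X := h2t.1
    obtain ⟨p, q, hpq⟩ := exists_pair_ne X
    obtain ⟨i, hi, hip⟩ := aux10_exists_fixing h2t hchar p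
    obtain ⟨j, hj, hjq⟩ := aux10_exists_fixing h2t hchar q
    refine ⟨i, j, hi, hj, ?_⟩
    intro h
    apply aux10_ne_one hi
    exact aux10_fix_two h2t hpq hip (by rw [h]; exact hjq)
  · intro u v u' v' hu hv hu' hv' huv hu'v'
    obtain ⟨p, hp⟩ := aux10_has_fixed h2t hchar hu
    obtain ⟨q, hq⟩ := aux10_has_fixed h2t hchar hv
    obtain ⟨p', hp'⟩ := aux10_has_fixed h2t hchar hu'
    obtain ⟨q', hq'⟩ := aux10_has_fixed h2t hchar hv'
    have hpq : p ≠ q := by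
      intro h
      exact huv (aux10_same_fix h2t hu hv hp (by rw [h]; exact hq))
    have hp'q' : p' ≠ q' := by
      intro h
      exact hu'v' (aux10_same_fix h2t hu' hv' hp' (by rw [h]; exact hq'))
    obtain ⟨g, ⟨hg1, hg2⟩, hguniq⟩ := h2t.2 p q p' q' hpq hp'q'
    have hgu : g * u * g⁻¹ = u' := by
      apply aux10_same_fix h2t (aux10_conj hu g) hu' (p := p') _ hp'
      rw [← hg1, mul_smul, mul_smul, inv_smul_smul, hp]
    have hgv : g * v * g⁻¹ = v' := by
      apply aux10_same_fix h2t (aux10_conj hv g) hv' (p := q') _ hq'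
      rw [← hg2, mul_smul, mul_smul, inv_smul_smul, hq]
    refine ⟨g, ⟨hgu, hgv⟩, ?_⟩
    rintro g₂ ⟨h1, h2⟩
    apply hguniq
    constructor
    · have e1 : u' • (g₂ • p) = g₂ • p := by
        rw [← h1, mul_smul, mul_smul, inv_smul_smul, hp]
      exact aux10_fix_uniq h2t hu' e1 hp'
    · have e1 : v' • (g₂ • q) = g₂ • q := by
        rw [← h2, mul_smul, mul_smul, inv_smul_smul, hq]
      exact aux10_fix_uniq h2t hv' e1 hq'
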